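/- Let α ∈ [0,1] and let A^{(1)}, …, A^{(N)} : [n]×[m] → ℝ be loop-atom matrices: each A^{(k)} is supported on a 2×2 block {i₁ᵏ, i₂ᵏ} × {j₁ᵏ, j₂ᵏ} (with i₁ᵏ ≠ i₂ᵏ and j₁ᵏ ≠ j₂ᵏ) where three of the four entries equal +1 and one entry equals −α, and all other entries are 0. Then the RBM instance W = Σ_{k=1}^N A^{(k)} has the all-ones configuration as a ground state of its energy E_W(v,h) = −Σ_{i,j} W_{ij} v_i h_j over {−1,1}^n × {−1,1}^m, and the ground-state energy equals −N(3−α). -/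

import Mathlib

open Finset

/-- The RBM energy of an unbiased RBM with weight matrix `W`. -/
noncomputable def rbmEnergy {n m : ℕ} (W : Fin n → Fin m → ℝ)
    (v : Fin n → ℝ) (h : Fin m → ℝ) : ℝ :=
  -(∑ i, ∑ j, W i j * v i * h j)

/-- A loop atom with parameter `α`: a matrix supported on two distinct rows and two
distinct columns, where three of the four supported entries equal `+1` and one
equals `-α`. -/
def IsLoopAtom {n m : ℕ} (α : ℝ) (A : Fin n → Fin m → ℝ) : Prop :=
  ∃ (i₁ i₂ : Fin n) (j₁ j₂ : Fin m), i₁ ≠ i₂ ∧ j₁ ≠ j₂ ∧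
    ((A i₁ j₁ = -α ∧ A i₁ j₂ = 1 ∧ A i₂ j₁ = 1 ∧ A i₂ j₂ = 1) ∨
     (A i₁ j₁ = 1 ∧ A i₁ j₂ = -α ∧ A i₂ j₁ = 1 ∧ A i₂ j₂ = 1) ∨
     (A i₁ j₁ = 1 ∧ A i₁ j₂ = 1 ∧ A i₂ j₁ = -α ∧ A i₂ j₂ = 1) ∨
     (A i₁ j₁ = 1 ∧ A i₁ j₂ = 1 ∧ A i₂ j₁ = 1 ∧ A i₂ j₂ = -α)) ∧
    (∀ i j, ¬((i = i₁ ∨ i = i₂) ∧ (j = j₁ ∨ j = j₂)) → A i j = 0)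

lemma sum_reduce {n m : ℕ} (A : Fin n → Fin m → ℝ) (i₁ i₂ : Fin n) (j₁ j₂ : Fin m)
    (hi : i₁ ≠ i₂) (hj : j₁ ≠ j₂)
    (hz : ∀ i j, ¬((i = i₁ ∨ i = i₂) ∧ (j = j₁ ∨ j = j₂)) → A i j = 0)
    (v : Fin n → ℝ) (h : Fin m → ℝ) :
    ∑ i, ∑ j, A i j * v i * h j =
      A i₁ j₁ * v i₁ * h j₁ + A i₁ j₂ * v i₁ * h j₂ +
      A i₂ j₁ * v i₂ * h j₁ + A i₂ j₂ * v i₂ * h j₂ := by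
  rw [← Finset.sum_subset (Finset.subset_univ ({i₁, i₂} : Finset (Fin n)))]
  · rw [Finset.sum_pair hi]
    have hrow : ∀ i, (i = i₁ ∨ i = i₂) →
        ∑ j, A i j * v i * h j = A i j₁ * v i * h j₁ + A i j₂ * v i * h j₂ := by
      intro i hi'
      rw [← Finset.sum_subset (Finset.subset_univ ({j₁, j₂} : Finset (Fin m))),
        Finset.sum_pair hj]
      intro j _ hjmem
      have : A i j = 0 := hz i j (by simp at hjmem; tauto)
      simp [this]
    rw [hrow i₁ (Or.inl rfl), hrow i₂ (Or.inr rfl)]; ring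
  · intro i _ himem
    apply Finset.sum_eq_zero
    intro j _
    have : A i j = 0 := hz i j (by simp at himem; tauto)
    simp [this]

lemma atom_le {n m : ℕ} {α : ℝ} (h0 : 0 ≤ α) (h1 : α ≤ 1)
    {A : Fin n → Fin m → ℝ} (hA : IsLoopAtom α A)
    (v : Fin n → ℝ) (h : Fin m → ℝ)
    (hv : ∀ i, v i = 1 ∨ v i = -1) (hh : ∀ j, h j = 1 ∨ h j = -1) :
    ∑ i, ∑ j, A i j * v i * h j ≤ 3 - α := by
  obtain ⟨i₁, i₂, j₁, j₂, hi, hj, hcase, hz⟩ := hA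
  rw [sum_reduce A i₁ i₂ j₁ j₂ hi hj hz v h]
  rcases hv i₁ with e1 | e1 <;> rcases hv i₂ with e2 | e2 <;>
    rcases hh j₁ with f1 | f1 <;> rcases hh j₂ with f2 | f2 <;>
    rcases hcase with ⟨a, b, c, d⟩ | ⟨a, b, c, d⟩ | ⟨a, b, c, d⟩ | ⟨a, b, c, d⟩ <;>
    rw [e1, e2, f1, f2, a, b, c, d] <;> linarith

lemma atom_eq {n m : ℕ} {α : ℝ}
    {A : Fin n → Fin m → ℝ} (hA : IsLoopAtom α A) :
    ∑ i, ∑ j, A i j * (1:ℝ) * (1:ℝ) = 3 - α := by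
  obtain ⟨i₁, i₂, j₁, j₂, hi, hj, hcase, hz⟩ := hA
  rw [sum_reduce A i₁ i₂ j₁ j₂ hi hj hz (fun _ => 1) (fun _ => 1)]
  rcases hcase with ⟨a, b, c, d⟩ | ⟨a, b, c, d⟩ | ⟨a, b, c, d⟩ | ⟨a, b, c, d⟩ <;>
    rw [a, b, c, d] <;> ring

theorem sum_of_loop_atoms_ground_state (n m N : ℕ) (α : ℝ)
    (hα : α ∈ Set.Icc (0:ℝ) 1)
    (A : Fin N → Fin n → Fin m → ℝ) (hA : ∀ k, IsLoopAtom α (A k)) :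
    (∀ (v : Fin n → ℝ) (h : Fin m → ℝ),
      (∀ i, v i = 1 ∨ v i = -1) → (∀ j, h j = 1 ∨ h j = -1) →
      rbmEnergy (fun i j => ∑ k, A k i j) v h ≥
        rbmEnergy (fun i j => ∑ k, A k i j) (fun _ => 1) (fun _ => 1)) ∧
    rbmEnergy (fun i j => ∑ k, A k i j) (fun _ => 1) (fun _ => 1) =
      -(N * (3 - α)) := by
  obtain ⟨h0, h1⟩ := hα
  have key : ∀ (v : Fin n → ℝ) (h : Fin m → ℝ),
      rbmEnergy (fun i j => ∑ k, A k i j) v h =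
        -(∑ k, ∑ i, ∑ j, A k i j * v i * h j) := by
    intro v h
    unfold rbmEnergy
    congr 1
    simp_rw [Finset.sum_mul]
    conv_lhs => enter [2, i]; rw [Finset.sum_comm]
    rw [Finset.sum_comm]
  have heq : rbmEnergy (fun i j => ∑ k, A k i j) (fun _ => 1) (fun _ => 1) =
      -(N * (3 - α)) := by
    rw [key]
    have : ∑ k, ∑ i, ∑ j, A k i j * (1:ℝ) * (1:ℝ) = N * (3 - α) := by
      rw [Finset.sum_congr rfl (fun k _ => atom_eq (hA k))]
      simp [mul_comm]; ring
    rw [this]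
  refine ⟨fun v h hv hh => ?_, heq⟩
  rw [heq, key]
  have : ∑ k, ∑ i, ∑ j, A k i j * v i * h j ≤ N * (3 - α) := by
    calc ∑ k, ∑ i, ∑ j, A k i j * v i * h j
        ≤ ∑ _k : Fin N, (3 - α) :=
          Finset.sum_le_sum (fun k _ => atom_le h0 h1 (hA k) v h hv hh)
      _ = N * (3 - α) := by simp [mul_comm]; ring
  linarith
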